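/- Let K be a field of characteristic zero, let α₃, α₂, α₁, α₀ ∈ K, set F(z) = z⁴ + α₃z³ + α₂z² + α₁z + α₀, and suppose z₀ ∈ K satisfies F(z₀) = 0. Put α̃₁ = F′(z₀) and α̃₂ = F″(z₀)/2. Then the point P = (α̃₂/3, α̃₁) lies on the spectral elliptic curve, i.e. α̃₁² = (α̃₂/3)³ + B(α₃,α₂,α₁,α₀)·(α̃₂/3) + C(α₃,α₂,α₁,α₀). -/

import Mathlib

/-- The coefficient `B` of the spectral elliptic curve `y² = x³ + Bx + C` of the quartic
`z⁴ + α₃z³ + α₂z² + α₁z + α₀`. -/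
def specB {K : Type*} [Field K] (α₃ α₂ α₁ α₀ : K) : K :=
  α₁ * α₃ - (1 / 3) * α₂ ^ 2 - 4 * α₀

/-- The coefficient `C` of the spectral elliptic curve `y² = x³ + Bx + C` of the quartic
`z⁴ + α₃z³ + α₂z² + α₁z + α₀`. -/
def specC {K : Type*} [Field K] (α₃ α₂ α₁ α₀ : K) : K :=
  α₀ * α₃ ^ 2 - (1 / 3) * α₁ * α₂ * α₃ + (2 / 27) * α₂ ^ 3 - (8 / 3) * α₀ * α₂ + α₁ ^ 2

theorem stmt_10 {K : Type*} [Field K] [CharZero K] (α₃ α₂ α₁ α₀ z₀ : K)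
    (F : Polynomial K)
    (hF : F = Polynomial.X ^ 4 + Polynomial.C α₃ * Polynomial.X ^ 3
      + Polynomial.C α₂ * Polynomial.X ^ 2 + Polynomial.C α₁ * Polynomial.X + Polynomial.C α₀)
    (hz₀ : F.eval z₀ = 0)
    (a₁ a₂ : K)
    (ha₁ : a₁ = (Polynomial.derivative F).eval z₀)
    (ha₂ : a₂ = (Polynomial.derivative (Polynomial.derivative F)).eval z₀ / 2) :
    a₁ ^ 2 = (a₂ / 3) ^ 3 + specB α₃ α₂ α₁ α₀ * (a₂ / 3) + specC α₃ α₂ α₁ α₀ := by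
  subst hF ha₁ ha₂
  simp only [Polynomial.eval_add, Polynomial.eval_mul, Polynomial.eval_pow,
    Polynomial.eval_X, Polynomial.eval_C, map_add, map_mul, map_pow,
    Polynomial.derivative_X_pow, Polynomial.derivative_C, Polynomial.derivative_X,
    Polynomial.derivative_mul, Polynomial.derivative_pow, Polynomial.eval_natCast,
    Polynomial.eval_ofNat] at *
  norm_num only [Polynomial.eval_one, Polynomial.eval_zero, Polynomial.derivative_one,
    Polynomial.derivative_zero] at *
  unfold specB specC
  field_simp
  linear_combination (5832 * (8 * z₀ ^ 2 + 4 * z₀ * α₃ - α₃ ^ 2 + 4 * α₂)) * hz₀
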